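/- (Suboptimal geometric descent shrinkage.) For any x₀ ∈ ℝ^n and any R₀² ≥ 0, with x₀⁺ := x₀ − ∇f(x₀)/β and x₀^{++} := x₀ − ∇f(x₀)/α, there exists x₁ ∈ ℝ^n such that B(x₀, R₀²) ∩ B(x₀^{++}, (1 − 1/κ)·‖∇f(x₀)‖²/α² − (2/α)·(f(x₀⁺) − f*)) ⊆ B(x₁, (1 − 1/κ)·R₀²), where κ := β/α. In particular, if x* ∈ B(x₀, R₀²) then x* ∈ B(x₁, (1 − 1/κ)·R₀²). -/

import Mathlib

open scoped RealInnerProductSpace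

section aux

variable {n : ℕ}

local notation "E" => EuclideanSpace ℝ (Fin n)

lemma line_hasDerivAt (f : E → ℝ) (hf : Differentiable ℝ f) (x v : E) (t : ℝ) :
    HasDerivAt (fun t : ℝ => f (x + t • v)) ⟪gradient f (x + t • v), v⟫ t := by
  have hL : HasDerivAt (fun t : ℝ => x + t • v) v t := by
    simpa using ((hasDerivAt_id t).smul_const v).const_add x
  have hg := (hf (x + t • v)).hasGradientAt
  have := hg.hasFDerivAt.comp_hasDerivAt t hL
  exact this

/-- gradient lower bound from strong convexity -/
lemma grad_lower (α : ℝ) (f : E → ℝ)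
    (hsc : ConvexOn ℝ Set.univ (fun z => f z - α / 2 * ‖z‖ ^ 2))
    (hf : Differentiable ℝ f) (x y : E) :
    f x + ⟪gradient f x, y - x⟫ + α / 2 * ‖y - x‖ ^ 2 ≤ f y := by
  set v := y - x with hv
  set q : ℝ → ℝ := fun t => f (x + t • v) - α / 2 * (‖x‖ ^ 2 + 2 * t * ⟪x, v⟫ + t ^ 2 * ‖v‖ ^ 2)
    with hq
  have hqc : ConvexOn ℝ Set.univ q := by
    have := hsc.comp_affineMap (AffineMap.lineMap x (x + v) : ℝ →ᵃ[ℝ] E)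
    have heq : q = (fun z => f z - α / 2 * ‖z‖ ^ 2) ∘ (AffineMap.lineMap x (x + v)) := by
      funext t
      simp only [Function.comp_apply, AffineMap.lineMap_apply, vsub_eq_sub, vadd_eq_add,
        add_sub_cancel_left, hq]
      rw [show t • v + x = x + t • v from add_comm _ _]
      rw [norm_add_sq_real, real_inner_smul_right, norm_smul, Real.norm_eq_abs, mul_pow, sq_abs]
      ring
    rw [heq]
    simpa using this
  have hd : HasDerivAt q (⟪gradient f x, v⟫ - α / 2 * (2 * ⟪x, v⟫)) 0 := by
    have h1 := line_hasDerivAt f hf x v 0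
    have h2 : HasDerivAt (fun t : ℝ =>
        α / 2 * (‖x‖ ^ 2 + 2 * t * ⟪x, v⟫ + t ^ 2 * ‖v‖ ^ 2))
        (α / 2 * (2 * ⟪x, v⟫ + 2 * 0 * ‖v‖ ^ 2)) 0 := by
      have : HasDerivAt (fun t : ℝ => ‖x‖ ^ 2 + 2 * t * ⟪x, v⟫ + t ^ 2 * ‖v‖ ^ 2)
          (2 * ⟪x, v⟫ + 2 * 0 * ‖v‖ ^ 2) 0 := by
        have ha : HasDerivAt (fun t : ℝ => 2 * t * ⟪x, v⟫) (2 * ⟪x, v⟫) 0 := by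
          simpa using (((hasDerivAt_id (0:ℝ)).const_mul 2).mul_const ⟪x, v⟫)
        have hb : HasDerivAt (fun t : ℝ => t ^ 2 * ‖v‖ ^ 2) (2 * 0 * ‖v‖ ^ 2) 0 := by
          simpa using ((hasDerivAt_pow 2 (0:ℝ)).mul_const (‖v‖ ^ 2))
        exact (ha.const_add (‖x‖ ^ 2)).add hb
      exact this.const_mul (α / 2)
    have := h1.sub h2
    simp only [zero_smul, add_zero] at this
    exact this.congr_deriv (by ring)
  have hslope := hqc.le_slope_of_hasDerivAt (Set.mem_univ (0:ℝ)) (Set.mem_univ (1:ℝ))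
    one_pos hd
  rw [slope_def_field] at hslope
  simp only [hq, one_smul, zero_smul, add_zero] at hslope
  have hxy : x + v = y := by rw [hv]; abel
  rw [hxy] at hslope
  have : f x + ⟪gradient f x, v⟫ + α / 2 * ‖v‖ ^ 2 ≤ f y := by nlinarith [hslope]
  simpa [hv] using this

/-- descent upper bound from smoothness -/
lemma grad_upper (β : ℝ) (hβ : 0 < β) (f : E → ℝ)
    (hf : Differentiable ℝ f)
    (hlip : LipschitzWith β.toNNReal (fun z => gradient f z)) (x y : E) :
    f y ≤ f x + ⟪gradient f x, y - x⟫ + β / 2 * ‖y - x‖ ^ 2 := by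
  set v := y - x with hv
  set r : ℝ → ℝ := fun t => f (x + t • v) - t * ⟪gradient f x, v⟫ - β / 2 * t ^ 2 * ‖v‖ ^ 2
    with hr
  have hder : ∀ t : ℝ, HasDerivAt r
      (⟪gradient f (x + t • v), v⟫ - ⟪gradient f x, v⟫ - β / 2 * (2 * t) * ‖v‖ ^ 2) t := by
    intro t
    have h1 := line_hasDerivAt f hf x v t
    have h2 : HasDerivAt (fun t : ℝ => t * ⟪gradient f x, v⟫) ⟪gradient f x, v⟫ t := by
      simpa using (hasDerivAt_id t).mul_const ⟪gradient f x, v⟫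
    have h3 : HasDerivAt (fun t : ℝ => β / 2 * t ^ 2 * ‖v‖ ^ 2) (β / 2 * (2 * t) * ‖v‖ ^ 2) t := by
      have := ((hasDerivAt_pow 2 t).const_mul (β / 2)).mul_const (‖v‖ ^ 2)
      simpa [mul_comm, mul_assoc, mul_left_comm] using this
    exact (h1.sub h2).sub h3
  have hmono : AntitoneOn r (Set.Icc (0:ℝ) 1) := by
    apply antitoneOn_of_deriv_nonpos (convex_Icc 0 1)
    · exact fun t _ => ((hder t).continuousAt).continuousWithinAt
    · intro t _
      exact ((hder t).differentiableAt).differentiableWithinAt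
    · intro t ht
      rw [interior_Icc] at ht
      rw [(hder t).deriv]
      have hb : ⟪gradient f (x + t • v) - gradient f x, v⟫ ≤ β * t * ‖v‖ ^ 2 := by
        calc ⟪gradient f (x + t • v) - gradient f x, v⟫
            ≤ ‖gradient f (x + t • v) - gradient f x‖ * ‖v‖ := real_inner_le_norm _ _
          _ ≤ (β * (t * ‖v‖)) * ‖v‖ := by
              apply mul_le_mul_of_nonneg_right _ (norm_nonneg v)
              have := hlip.dist_le_mul (x + t • v) x
              rw [dist_eq_norm] at this
              simp only [dist_eq_norm, add_sub_cancel_left] at this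
              calc ‖gradient f (x + t • v) - gradient f x‖ = dist (gradient f (x + t • v)) (gradient f x) := (dist_eq_norm _ _).symm
                _ ≤ β.toNNReal * dist (x + t • v) x := hlip.dist_le_mul _ _
                _ = β.toNNReal * ‖t • v‖ := by rw [dist_eq_norm]; simp
                _ = β * (t * ‖v‖) := by
                    rw [norm_smul, Real.norm_eq_abs, abs_of_pos ht.1,
                      Real.coe_toNNReal _ hβ.le]
          _ = β * t * ‖v‖ ^ 2 := by ring
      have : ⟪gradient f (x + t • v), v⟫ - ⟪gradient f x, v⟫ ≤ β * t * ‖v‖ ^ 2 := by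
        rw [← inner_sub_left]; exact hb
      nlinarith
  have h01 := hmono (Set.mem_Icc.2 ⟨le_refl 0, zero_le_one⟩)
    (Set.mem_Icc.2 ⟨zero_le_one, le_refl 1⟩) zero_le_one
  simp only [hr, zero_smul, add_zero, one_smul, zero_mul, sub_zero, one_pow, mul_one,
    zero_pow, mul_zero] at h01
  have hxy : x + v = y := by rw [hv]; abel
  rw [hxy] at h01
  linarith

end aux

/-- The ball `B(c, r²) = {y : ‖y − c‖² ≤ r²}` (empty when `r² < 0`). -/
def B {n : ℕ} (c : EuclideanSpace ℝ (Fin n)) (r2 : ℝ) : Set (EuclideanSpace ℝ (Fin n)) :=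
  {y | ‖y - c‖ ^ 2 ≤ r2}

/-- suboptimal geometric descent shrinkage. With `x₀⁺ = x₀ − ∇f(x₀)/β`,
`x₀^{++} = x₀ − ∇f(x₀)/α` and `κ = β/α`, there exists `x₁` with
`B(x₀, R₀²) ∩ B(x₀^{++}, (1 − 1/κ)‖∇f(x₀)‖²/α² − (2/α)(f(x₀⁺) − f*)) ⊆ B(x₁, (1 − 1/κ)R₀²)`;
in particular, if `x* ∈ B(x₀, R₀²)` then `x* ∈ B(x₁, (1 − 1/κ)R₀²)`. -/
theorem stmt_19 (n : ℕ) (α β κ : ℝ) (hα : 0 < α) (hαβ : α ≤ β) (hκ : κ = β / α)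
    (f : EuclideanSpace ℝ (Fin n) → ℝ)
    (hsc : ConvexOn ℝ Set.univ (fun z => f z - α / 2 * ‖z‖ ^ 2))
    (hf : Differentiable ℝ f)
    (hlip : LipschitzWith β.toNNReal (fun z => gradient f z))
    (xstar : EuclideanSpace ℝ (Fin n)) (hmin : IsMinOn f Set.univ xstar)
    (x0 : EuclideanSpace ℝ (Fin n)) (R02 : ℝ) (hR0 : 0 ≤ R02) :
    ∃ x1 : EuclideanSpace ℝ (Fin n),
      (B x0 R02 ∩ B (x0 - α⁻¹ • gradient f x0)
          ((1 - 1 / κ) * ‖gradient f x0‖ ^ 2 / α ^ 2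
            - 2 / α * (f (x0 - β⁻¹ • gradient f x0) - f xstar))
        ⊆ B x1 ((1 - 1 / κ) * R02))
      ∧ (xstar ∈ B x0 R02 → xstar ∈ B x1 ((1 - 1 / κ) * R02)) := by
  have hβ : 0 < β := lt_of_lt_of_le hα hαβ
  set g := gradient f x0 with hg
  set G := ‖g‖ ^ 2 with hG
  have hGnn : 0 ≤ G := sq_nonneg _
  have hκα : 1 / κ = α / β := by rw [hκ, one_div_div]
  have hl0 : 0 < α / β := div_pos hα hβ
  have hl1 : α / β ≤ 1 := (div_le_one hβ).2 hαβ
  -- descent lemma at x0⁺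
  have hplus : f (x0 - β⁻¹ • g) ≤ f x0 - G / (2 * β) := by
    have := grad_upper β hβ f hf hlip x0 (x0 - β⁻¹ • g)
    have hsub : (x0 - β⁻¹ • g) - x0 = -(β⁻¹ • g) := by abel
    rw [hsub] at this
    have hi : ⟪g, -(β⁻¹ • g)⟫ = -(β⁻¹ * G) := by
      rw [inner_neg_right, real_inner_smul_right, real_inner_self_eq_norm_sq]
    have hn : ‖-(β⁻¹ • g)‖ ^ 2 = β⁻¹ ^ 2 * G := by
      rw [norm_neg, norm_smul, mul_pow, Real.norm_eq_abs, sq_abs]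
    rw [hi, hn] at this
    have : f (x0 - β⁻¹ • g) ≤ f x0 - β⁻¹ * G + β / 2 * (β⁻¹ ^ 2 * G) := by linarith
    calc f (x0 - β⁻¹ • g) ≤ f x0 - β⁻¹ * G + β / 2 * (β⁻¹ ^ 2 * G) := this
      _ = f x0 - G / (2 * β) := by field_simp; ring
  have hfstar : f xstar ≤ f (x0 - β⁻¹ • g) := hmin (Set.mem_univ _)
  set s : ℝ := 2 / α * (f (x0 - β⁻¹ • g) - f xstar) with hs
  have hs0 : 0 ≤ s := by
    apply mul_nonneg (by positivity)
    linarith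
  set r2 : ℝ := (1 - 1 / κ) * G / α ^ 2 - s with hr2
  have hincl : B x0 R02 ∩ B (x0 - α⁻¹ • g) r2 ⊆ B (x0 - β⁻¹ • g) ((1 - 1 / κ) * R02) := by
    rintro y ⟨h1, h2⟩
    simp only [B, Set.mem_setOf_eq] at h1 h2 ⊢
    -- expand
    have key : ∀ c : ℝ, ‖y - (x0 - c • g)‖ ^ 2
        = ‖y - x0‖ ^ 2 + 2 * c * ⟪y - x0, g⟫ + c ^ 2 * G := by
      intro c
      have h : y - (x0 - c • g) = (y - x0) + c • g := by abel
      rw [h, hG]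
      simp only [← real_inner_self_eq_norm_sq, inner_add_add_self, real_inner_smul_left,
        real_inner_smul_right]
      rw [real_inner_comm g (y - x0)]
      ring
    rw [key] at h2 ⊢
    rw [hr2] at h2
    have hβinv : β⁻¹ = (α / β) * α⁻¹ := by field_simp
    have hαinv2 : (α⁻¹ : ℝ) ^ 2 = 1 / α ^ 2 := by field_simp
    -- h2 : ‖y - x0‖² + 2α⁻¹⟪y-x0,g⟫ + α⁻²G ≤ (1 - 1/κ)G/α² - s
    -- goal: ‖y-x0‖² + 2β⁻¹⟪y-x0,g⟫ + β⁻²G ≤ (1-1/κ)R02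
    rw [hκα] at h2 ⊢
    set u2 := ‖y - x0‖ ^ 2
    set p := ⟪y - x0, g⟫
    have hu2 : 0 ≤ u2 := sq_nonneg _
    clear_value u2 p G s r2
    have e1 : (2:ℝ) * α⁻¹ * p ≤ (1 - α/β) * G / α ^ 2 - s - u2 - α⁻¹ ^ 2 * G := by
      linarith
    have e2 : 2 * β⁻¹ * p = (α/β) * (2 * α⁻¹ * p) := by
      rw [hβinv]; ring
    have hβinv2 : (β⁻¹:ℝ) ^ 2 = (α/β)^2 * α⁻¹ ^ 2 := by field_simp
    calc u2 + 2 * β⁻¹ * p + β⁻¹ ^ 2 * G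
        = u2 + (α/β) * (2 * α⁻¹ * p) + (α/β)^2 * (α⁻¹ ^ 2 * G) := by
          rw [e2, hβinv2]; ring
      _ ≤ u2 + (α/β) * ((1 - α/β) * G / α ^ 2 - s - u2 - α⁻¹ ^ 2 * G)
            + (α/β)^2 * (α⁻¹ ^ 2 * G) := by
          linarith [mul_le_mul_of_nonneg_left e1 hl0.le]
      _ = (1 - α/β) * u2 - (α/β) * s
            + (α/β) * G * ((1 - α/β) / α^2 - α⁻¹^2 + (α/β) * α⁻¹^2) := by ring
      _ = (1 - α/β) * u2 - (α/β) * s := by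
          rw [hαinv2]; ring_nf
      _ ≤ (1 - α/β) * R02 := by
          linarith [mul_le_mul_of_nonneg_left h1 (sub_nonneg.2 hl1), mul_nonneg hl0.le hs0]
  refine ⟨x0 - β⁻¹ • g, hincl, fun hx => hincl ⟨hx, ?_⟩⟩
  · simp only [B, Set.mem_setOf_eq]
    set w := xstar - x0 with hw
    have hlow := grad_lower α f hsc hf x0 xstar
    have key : ∀ c : ℝ, ‖xstar - (x0 - c • g)‖ ^ 2
        = ‖w‖ ^ 2 + 2 * c * ⟪w, g⟫ + c ^ 2 * G := by
      intro c
      have h : xstar - (x0 - c • g) = w + c • g := by rw [hw]; abel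
      rw [h, hG]
      simp only [← real_inner_self_eq_norm_sq, inner_add_add_self, real_inner_smul_left,
        real_inner_smul_right]
      rw [real_inner_comm g w]
      ring
    show _ ≤ r2
    rw [key, hr2, hκα]
    -- hlow : f x0 + ⟪g, w⟫ + α/2‖w‖² ≤ f xstar
    have hsym : ⟪g, w⟫ = ⟪w, g⟫ := real_inner_comm _ _
    rw [hsym] at hlow
    have hαinv2 : (α⁻¹ : ℝ) ^ 2 = 1 / α ^ 2 := by field_simp
    -- combine: ⟪w,g⟫ ≤ f* − f x0 − α/2‖w‖², f x0 ≥ f(x0⁺) + G/(2β)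
    have h1 : ⟪w, g⟫ ≤ f xstar - f (x0 - β⁻¹ • g) - G / (2 * β) - α / 2 * ‖w‖ ^ 2 := by
      linarith
    have hgoal : ‖w‖ ^ 2 + 2 * α⁻¹ * ⟪w, g⟫ + α⁻¹ ^ 2 * G
        ≤ (1 - α / β) * G / α ^ 2 - s := by
      have h2 : 2 * α⁻¹ * ⟪w, g⟫ ≤ 2 * α⁻¹ *
          (f xstar - f (x0 - β⁻¹ • g) - G / (2 * β) - α / 2 * ‖w‖ ^ 2) := by
        apply mul_le_mul_of_nonneg_left h1 (by positivity)
      have h3 : 2 * α⁻¹ * (f xstar - f (x0 - β⁻¹ • g) - G / (2 * β) - α / 2 * ‖w‖ ^ 2)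
          = -s - G / (α * β) - ‖w‖ ^ 2 := by
        rw [hs]; field_simp; ring
      have hf2 : α⁻¹ ^ 2 * G - G / (α * β) = (1 - α / β) * G / α ^ 2 := by
        rw [hαinv2]; field_simp
      linarith [h2]
    rw [hw] at hgoal
    exact hgoal
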